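/- The recurrence T(n) ≤ (n/b)·T(b) + C·n with b = log₂ n and T(n) = O(n) for n ≤ 2 has solution T(n) ≤ n · c^{log* n} for a suitable constant c, i.e., T(n) = n · 2^{O(log* n)}. -/

import Mathlib

/-- The iterated logarithm: the number of times ⌈log₂⌉ must be applied to
reach a value at most 2. -/
def logStar (n : ℕ) : ℕ :=
  if n ≤ 2 then 0 else logStar (Nat.clog 2 n) + 1
termination_by n
decreasing_by
  have h2 := (n - 1).lt_two_pow_self
  have h1 : n ≤ 2 ^ (n - 1) := by omega
  have h3 := (Nat.clog_le_iff_le_pow (by norm_num : (1:ℕ) < 2)).mpr h1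
  omega

/-- The recurrence T(n) ≤ ⌈n/⌈log₂ n⌉⌉·T(⌈log₂ n⌉) + C·n (with T ≤ C on
n ≤ 2) has solution T(n) ≤ c^(log* n + 1) · n, i.e. T(n) = n·2^O(log* n). -/
theorem stmt10 (C : ℝ) (hC : 0 < C) (T : ℕ → ℝ)
    (hnonneg : ∀ n, 0 ≤ T n)
    (hbase : ∀ n ≤ 2, T n ≤ C)
    (hrec : ∀ n > 2, T n ≤
      (((n + Nat.clog 2 n - 1) / Nat.clog 2 n : ℕ) : ℝ) * T (Nat.clog 2 n) + C * n) :
    ∃ c : ℝ, 0 < c ∧ ∀ n ≥ 1, T n ≤ c ^ (logStar n + 1) * n := by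
  set c : ℝ := C + 2 with hc
  have hc1 : (1:ℝ) ≤ c := by linarith
  refine ⟨c, by linarith, ?_⟩
  intro n hn
  induction n using Nat.strong_induction_on with
  | _ n ih =>
  by_cases h2 : n ≤ 2
  · have hL : logStar n = 0 := by rw [logStar]; simp [h2]
    have h1 : (1:ℝ) ≤ (n:ℝ) := by exact_mod_cast hn
    have := hbase n h2
    rw [hL]
    have : T n ≤ c := by linarith
    calc T n ≤ c := this
      _ ≤ c ^ (0+1) * n := by rw [pow_one]; nlinarith
  · push_neg at h2
    set b := Nat.clog 2 n with hb
    have hb2 : 2 ≤ b := by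
      have : 2 ^ 1 < n := by omega
      have := (Nat.lt_clog_iff_pow_lt (by norm_num : (1:ℕ) < 2)).mpr this
      omega
    have hbn : b < n := by
      have h2' := (n - 1).lt_two_pow_self
      have h1 : n ≤ 2 ^ (n - 1) := by omega
      have h3 := (Nat.clog_le_iff_le_pow (by norm_num : (1:ℕ) < 2)).mpr h1
      omega
    have ihb : T b ≤ c ^ (logStar b + 1) * b := ih b hbn (by omega)
    have hL : logStar n = logStar b + 1 := by
      rw [logStar]; simp [show ¬ n ≤ 2 by omega, hb]
    set k : ℕ := (n + b - 1) / b with hk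
    have hkb : k * b ≤ 2 * n := by
      rw [hk]
      have := Nat.div_mul_le_self (n + b - 1) b
      omega
    have hkbR : (k:ℝ) * (b:ℝ) ≤ 2 * n := by exact_mod_cast hkb
    have hpow : (1:ℝ) ≤ c ^ (logStar b + 1) := one_le_pow₀ hc1
    have hTb : 0 ≤ T b := hnonneg b
    have hkpos : (0:ℝ) ≤ (k:ℝ) := Nat.cast_nonneg k
    have hrecn := hrec n h2
    rw [hL]
    have hnR : (1:ℝ) ≤ (n:ℝ) := by exact_mod_cast hn
    have step1 : (k:ℝ) * T b ≤ c ^ (logStar b + 1) * (2 * n) := by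
      calc (k:ℝ) * T b ≤ (k:ℝ) * (c ^ (logStar b + 1) * b) := by
            exact mul_le_mul_of_nonneg_left ihb hkpos
        _ = c ^ (logStar b + 1) * ((k:ℝ) * b) := by ring
        _ ≤ c ^ (logStar b + 1) * (2 * n) := by
            exact mul_le_mul_of_nonneg_left hkbR (by linarith)
    have : T n ≤ c ^ (logStar b + 1) * (2 * n) + C * n := le_trans hrecn (by
      linarith)
    calc T n ≤ c ^ (logStar b + 1) * (2 * n) + C * n := this
      _ ≤ c ^ (logStar b + 1 + 1) * n := by
          have hps : c ^ (logStar b + 1 + 1) = c ^ (logStar b + 1) * c := pow_succ c _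
          rw [hps]
          have hn0 : (0:ℝ) ≤ (n:ℝ) := by linarith
          have hint := mul_le_mul_of_nonneg_left hpow (mul_nonneg hC.le hn0)
          rw [hc]
          nlinarith [hint, hpow, hnR]
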